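/- Let Ω ⊆ ℝⁿ be open and convex, α > 0, and φ : Ω → ℝ differentiable with e^{αφ} concave on Ω. Then for all ξ, ξ' ∈ Ω, the logarithmic divergence L^{(α)}_φ[ξ:ξ'] := (1/α) log(1 + α ∇φ(ξ')·(ξ − ξ')) − (φ(ξ) − φ(ξ')) is nonnegative. -/

import Mathlib

open Real Set
open scoped RealInnerProductSpace

abbrev E (n : ℕ) := EuclideanSpace ℝ (Fin n)

theorem log_divergence_nonneg (n : ℕ) (Ω : Set (E n))
    (hΩopen : IsOpen Ω) (hΩconv : Convex ℝ Ω)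
    (α : ℝ) (hα : 0 < α)
    (φ : E n → ℝ) (Dφ : E n → E n)
    (hdiff : ∀ ξ ∈ Ω, HasGradientAt φ (Dφ ξ) ξ)
    (hconc : ConcaveOn ℝ Ω (fun ξ => Real.exp (α * φ ξ))) :
    ∀ ξ ∈ Ω, ∀ ξ' ∈ Ω,
      0 ≤ (1 / α) * Real.log (1 + α * ⟪Dφ ξ', ξ - ξ'⟫) - (φ ξ - φ ξ') := by
  intro ξ hξ ξ' hξ'
  have hline_eq : ∀ t : ℝ, (AffineMap.lineMap ξ' ξ : ℝ →ᵃ[ℝ] E n) t = ξ' + t • (ξ - ξ') := by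
    intro t
    rw [AffineMap.lineMap_apply_module]
    module
  have key : Real.exp (α * φ ξ) ≤ Real.exp (α * φ ξ') * (1 + α * ⟪Dφ ξ', ξ - ξ'⟫) := by
    set g : ℝ → ℝ := fun t => Real.exp (α * φ (ξ' + t • (ξ - ξ'))) with hg
    have hgconc : ConcaveOn ℝ (Icc (0:ℝ) 1) g := by
      have haff : ConcaveOn ℝ ((AffineMap.lineMap ξ' ξ : ℝ →ᵃ[ℝ] E n) ⁻¹' Ω)
          ((fun ζ => Real.exp (α * φ ζ)) ∘ (AffineMap.lineMap ξ' ξ : ℝ →ᵃ[ℝ] E n)) :=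
        hconc.comp_affineMap _
      have hsub : Icc (0:ℝ) 1 ⊆ (AffineMap.lineMap ξ' ξ : ℝ →ᵃ[ℝ] E n) ⁻¹' Ω := by
        intro t ht
        have h := hΩconv hξ' hξ (by linarith [ht.2] : 0 ≤ 1 - t) ht.1 (by ring)
        have : (AffineMap.lineMap ξ' ξ : ℝ →ᵃ[ℝ] E n) t = (1 - t) • ξ' + t • ξ := by
          rw [hline_eq t]; module
        simpa [mem_preimage, this] using h
      have h := haff.subset hsub (convex_Icc 0 1)
      have : ((fun ζ => Real.exp (α * φ ζ)) ∘ (AffineMap.lineMap ξ' ξ : ℝ →ᵃ[ℝ] E n)) = g := by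
        funext t
        simp only [Function.comp, hline_eq t, hg]
      rwa [this] at h
    have hgd : HasDerivAt g (Real.exp (α * φ ξ') * (α * ⟪Dφ ξ', ξ - ξ'⟫)) 0 := by
      have hφ : HasFDerivAt φ ((InnerProductSpace.toDual ℝ (E n)) (Dφ ξ')) ξ' :=
        (hdiff ξ' hξ').hasFDerivAt
      have hφ' : HasFDerivAt φ ((InnerProductSpace.toDual ℝ (E n)) (Dφ ξ'))
          (ξ' + (0:ℝ) • (ξ - ξ')) := by simpa using hφ
      have hline : HasDerivAt (fun t : ℝ => ξ' + t • (ξ - ξ')) (ξ - ξ') 0 := by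
        have : HasDerivAt (fun t : ℝ => t • (ξ - ξ')) ((1:ℝ) • (ξ - ξ')) 0 :=
          (hasDerivAt_id 0).smul_const (ξ - ξ')
        simpa using this.const_add ξ'
      have hcomp : HasDerivAt (fun t : ℝ => φ (ξ' + t • (ξ - ξ'))) ⟪Dφ ξ', ξ - ξ'⟫ 0 := by
        have := hφ'.comp_hasDerivAt 0 hline
        simp only [InnerProductSpace.toDual_apply_apply] at this
        exact this
      have := (hcomp.const_mul α).exp
      simpa [hg, mul_comm, mul_left_comm, mul_assoc] using this
    have hconv : ConvexOn ℝ (Icc (0:ℝ) 1) (fun t => -g t) := hgconc.neg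
    have hslope := hconv.le_slope_of_hasDerivAt (x := 0) (y := 1)
      (left_mem_Icc.2 zero_le_one) (right_mem_Icc.2 zero_le_one) zero_lt_one hgd.neg
    rw [slope_def_field] at hslope
    have h01 : g 1 - g 0 ≤ Real.exp (α * φ ξ') * (α * ⟪Dφ ξ', ξ - ξ'⟫) := by
      have h2 : (-g 1 - -g 0) / (1 - 0) = -(g 1 - g 0) := by ring
      rw [h2] at hslope
      linarith
    have hg0 : g 0 = Real.exp (α * φ ξ') := by simp [hg]
    have hg1 : g 1 = Real.exp (α * φ ξ) := by
      have : ξ' + (1:ℝ) • (ξ - ξ') = ξ := by module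
      simp [hg, this]
    rw [hg0, hg1] at h01
    nlinarith [Real.exp_pos (α * φ ξ')]
  have hpos : (0:ℝ) < 1 + α * ⟪Dφ ξ', ξ - ξ'⟫ := by
    have h1 := Real.exp_pos (α * φ ξ)
    have h2 := Real.exp_pos (α * φ ξ')
    nlinarith
  have hexp : Real.exp (α * (φ ξ - φ ξ')) ≤ 1 + α * ⟪Dφ ξ', ξ - ξ'⟫ := by
    rw [mul_sub, Real.exp_sub, div_le_iff₀ (Real.exp_pos _)]
    linarith [key]
  have hlog : α * (φ ξ - φ ξ') ≤ Real.log (1 + α * ⟪Dφ ξ', ξ - ξ'⟫) := by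
    have := Real.log_le_log (Real.exp_pos _) hexp
    rwa [Real.log_exp] at this
  have : φ ξ - φ ξ' ≤ (1 / α) * Real.log (1 + α * ⟪Dφ ξ', ξ - ξ'⟫) := by
    rw [div_mul_eq_mul_div, le_div_iff₀ hα, one_mul, mul_comm]
    exact hlog
  linarith
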